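/- Let $\alpha = (\frac{1}{2}, -\frac{1}{4}, \frac{1}{8}, -\frac{1}{16}, \ldots)$, i.e. $\alpha(i) = (-1)^{i+1}2^{-i}$, and let $W_\alpha = \{x \in c : \lim_i x(i) = \sum_i \alpha(i)x(i)\}$. Then for the set $C = \{e_1^*, e_3^*, e_5^*, \ldots\}$ of odd-indexed standard basis vectors of $\ell_1 = W_\alpha^*$, the $\sigma(\ell_1, W_\alpha)$-closed convex hull of $C$ is contained in the unit sphere $S_{\ell_1}$. -/

import Mathlib

open Filter Topology ENNReal NormedSpace

noncomputable section

instance : Fact ((1:ℝ≥0∞) ≤ 1) := ⟨le_rfl⟩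

/-- The space `ℓ₁` of absolutely summable real sequences. -/
abbrev ell1 : Type := lp (fun _ : ℕ => ℝ) 1

/-- The standard unit vector basis of `ℓ₁`. -/
def basisv (i : ℕ) : ell1 := lp.single 1 i (1:ℝ)

/-- The weak-star topology `σ(ℓ₁, X)` on `ℓ₁` induced by a predual `X` via an
isometric identification `e` of the dual of `X` with `ℓ₁`. -/
def wstar (X : Type*) [NormedAddCommGroup X] [NormedSpace ℝ X]
    (e : StrongDual ℝ X ≃ₗᵢ[ℝ] ell1) : TopologicalSpace ell1 :=
  TopologicalSpace.induced (fun y => StrongDual.toWeakDual (e.symm y)) inferInstance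

/-- The weak-star topology `σ(Y*, Y)` on the dual of a normed space `Y`. -/
def wsDual (Y : Type*) [NormedAddCommGroup Y] [NormedSpace ℝ Y] :
    TopologicalSpace (StrongDual ℝ Y) :=
  TopologicalSpace.induced (fun φ : StrongDual ℝ Y => StrongDual.toWeakDual φ)
    inferInstance

lemma ell1_summable_abs (y : ell1) : Summable fun i => |y i| := by
  have h := (lp.memℓp y).summable (p := 1) (by norm_num)
  simpa using h

lemma ell1_norm_eq (y : ell1) : ‖y‖ = ∑' i, |y i| := by
  have h := lp.norm_eq_tsum_rpow (p := 1) (by norm_num) y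
  simpa using h

lemma tsum_basis_mul (j : ℕ) (w : ℕ → ℝ) : ∑' i, (basisv j : ∀ _ : ℕ, ℝ) i * w i = w j := by
  rw [tsum_eq_single j]
  · simp [basisv, lp.single_apply_self]
  · intro b hb
    simp [basisv, lp.single_apply_ne _ _ _ hb, Pi.single_apply, hb]

def af : ℕ → ℝ := fun i => (-1) ^ i * (1 / 2) ^ (i + 1)

lemma af_eq (i : ℕ) : af i = (1/2) * (-1/2 : ℝ)^i := by
  simp only [af]
  rw [show (-1/2 : ℝ) = (-1) * (1/2) by norm_num, mul_pow, pow_succ]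
  ring

lemma abs_af (i : ℕ) : |af i| = (1/2 : ℝ)^(i+1) := by
  rw [af_eq, abs_mul, abs_pow, abs_of_nonneg (by norm_num : (0:ℝ) ≤ 1/2),
    show |(-1/2:ℝ)| = 1/2 by rw [abs_of_nonpos (by norm_num)]; norm_num, pow_succ]
  ring

lemma summable_af : Summable af := by
  rw [show af = fun i => (1/2) * (-1/2:ℝ)^i from funext af_eq]
  exact (summable_geometric_of_norm_lt_one (show ‖(-1/2:ℝ)‖ < 1 by rw [Real.norm_eq_abs, abs_lt]; constructor <;> norm_num)).mul_left (1/2)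

lemma tsum_af : ∑' i, af i = 1/3 := by
  rw [show af = fun i => (1/2) * (-1/2:ℝ)^i from funext af_eq]
  rw [tsum_mul_left, tsum_geometric_of_norm_lt_one (by rw [Real.norm_eq_abs, abs_lt]; constructor <;> norm_num)]
  norm_num

lemma summable_abs_af : Summable fun i => |af i| := by
  have : (fun i => |af i|) = fun i => (1/2:ℝ) * (1/2)^i := by
    funext i; rw [abs_af, pow_succ']
  rw [this]
  exact (summable_geometric_of_lt_one (by norm_num) (by norm_num)).mul_left _

lemma tsum_abs_af : ∑' i, |af i| = 1 := by
  have : (fun i => |af i|) = fun i => (1/2:ℝ) * (1/2)^i := by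
    funext i; rw [abs_af, pow_succ']
  rw [this, tsum_mul_left, tsum_geometric_of_lt_one (by norm_num) (by norm_num)]
  norm_num

lemma summable_mul_of_bounded (y : ell1) {w : ℕ → ℝ} {M : ℝ} (hb : ∀ i, |w i| ≤ M) :
    Summable fun i => y i * w i := by
  refine Summable.of_abs (Summable.of_nonneg_of_le (fun i => abs_nonneg _) (fun i => ?_)
    ((ell1_summable_abs y).mul_right M))
  rw [abs_mul]
  exact mul_le_mul_of_nonneg_left (hb i) (abs_nonneg _)

lemma abs_tsum_mul_le (y : ell1) {w : ℕ → ℝ} {M : ℝ} (hb : ∀ i, |w i| ≤ M) :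
    |∑' i, y i * w i| ≤ M * ‖y‖ := by
  have hsum := summable_mul_of_bounded y hb
  have habs : Summable fun i => |y i * w i| := hsum.abs
  have h1 : |∑' i, y i * w i| ≤ ∑' i, |y i * w i| := by
    have := norm_tsum_le_tsum_norm (f := fun i => y i * w i)
      (by simpa only [Real.norm_eq_abs] using habs)
    simpa only [Real.norm_eq_abs] using this
  have h2 : ∑' i, |y i * w i| ≤ ∑' i, M * |y i| := by
    refine Summable.tsum_le_tsum (fun i => ?_) habs ((ell1_summable_abs y).mul_left M)
    rw [abs_mul, mul_comm]
    exact mul_le_mul_of_nonneg_right (hb i) (abs_nonneg _)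
  rw [tsum_mul_left] at h2
  rw [ell1_norm_eq]
  exact h1.trans h2

def WP (x : ℕ → ℝ) : Prop :=
  (∃ L : ℝ, Tendsto x atTop (𝓝 L)) ∧ Tendsto x atTop (𝓝 (∑' i, af i * x i))

abbrev Wt := {x : ℕ → ℝ // WP x}

def FF : ell1 → (Wt → ℝ) := fun y => fun w : Wt => ∑' i, y i * w.1 i

def wsT : TopologicalSpace ell1 := TopologicalSpace.induced FF inferInstance

def CC : Set ell1 := Set.range fun k => basisv (2 * k)

lemma key (w : Wt) {M : ℝ} (hb : ∀ i, |w.1 i| ≤ M) (B : ℝ)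
    (hC : ∀ k, w.1 (2 * k) ≤ B)
    {y : ell1} (hy : y ∈ @closure _ wsT (convexHull ℝ CC)) :
    ∑' i, y i * w.1 i ≤ B := by
  letI : TopologicalSpace ell1 := wsT
  set S : Set ell1 := {z : ell1 | ∑' i, z i * w.1 i ≤ B} with hS
  have hclosed : IsClosed S := by
    have hc : IsClosed {g : Wt → ℝ | g w ≤ B} :=
      isClosed_le (continuous_apply w) continuous_const
    have hFF : Continuous FF := continuous_induced_dom
    have : S = FF ⁻¹' {g : Wt → ℝ | g w ≤ B} := rfl
    rw [this]
    exact hc.preimage hFF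
  have hconv : Convex ℝ S := by
    intro z₁ h₁ z₂ h₂ a b ha hb' hab
    simp only [hS, Set.mem_setOf_eq] at h₁ h₂ ⊢
    have e1 : ∀ i, ((a • z₁ + b • z₂ : ell1) : ∀ _ : ℕ, ℝ) i * w.1 i
        = a * (z₁ i * w.1 i) + b * (z₂ i * w.1 i) := by
      intro i
      simp only [lp.coeFn_add, lp.coeFn_smul, Pi.add_apply, Pi.smul_apply, smul_eq_mul]
      ring
    rw [tsum_congr e1, Summable.tsum_add (((summable_mul_of_bounded z₁ hb).mul_left a))
      (((summable_mul_of_bounded z₂ hb).mul_left b)), tsum_mul_left, tsum_mul_left]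
    calc a * ∑' i, z₁ i * w.1 i + b * ∑' i, z₂ i * w.1 i ≤ a * B + b * B := by
          gcongr
      _ = B := by rw [← add_mul, hab, one_mul]
  have hhull : convexHull ℝ CC ⊆ S := by
    apply convexHull_min _ hconv
    rintro _ ⟨k, rfl⟩
    simp only [hS, Set.mem_setOf_eq]
    rw [tsum_basis_mul]
    exact hC k
  exact closure_minimal hhull hclosed hy

lemma af_odd (k : ℕ) : af (2*k+1) = -((1/2:ℝ)^(2*k+2)) := by
  have : ((-1:ℝ))^(2*k+1) = -1 := Odd.neg_one_pow ⟨k, by ring⟩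
  simp only [af, this]
  ring

lemma pow_half_sq (m : ℕ) : ((1/2:ℝ))^(2*m) = (1/4)^m := by
  rw [pow_mul]; norm_num

lemma sum_odd_af (n : ℕ) :
    ∑ i ∈ Finset.range (2*n), (if i % 2 = 0 then (0:ℝ) else af i)
      = -(1 - (1/4:ℝ)^n)/3 := by
  induction n with
  | zero => simp
  | succ n ih =>
    have h2 : 2*(n+1) = (2*n+1)+1 := by ring
    rw [h2, Finset.sum_range_succ, Finset.sum_range_succ, ih]
    have he : (2*n) % 2 = 0 := by omega
    have ho : (2*n+1) % 2 ≠ 0 := by omega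
    rw [if_pos he, if_neg ho, af_odd]
    have : ((1/2:ℝ))^(2*n+2) = (1/4)^(n+1) := by
      rw [show 2*n+2 = 2*(n+1) by ring, pow_half_sq]
    rw [this, pow_succ]
    ring

def Mc (n : ℕ) : ℝ := (1 + (1/4:ℝ)^n) / (1 - (1/4:ℝ)^n)

def lw (n : ℕ) : ℕ → ℝ := fun i => if i % 2 = 0 then 1 else if i < 2*n then -Mc n else 1

lemma q_lt_one {n : ℕ} (hn : 1 ≤ n) : (1/4:ℝ)^n < 1 :=
  pow_lt_one₀ (by norm_num) (by norm_num) (by omega)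

lemma Mc_ge_one {n : ℕ} (hn : 1 ≤ n) : 1 ≤ Mc n := by
  have h := q_lt_one hn
  have h0 : (0:ℝ) ≤ (1/4:ℝ)^n := by positivity
  rw [Mc, le_div_iff₀ (by linarith)]
  linarith

lemma abs_lw_le {n : ℕ} (hn : 1 ≤ n) (i : ℕ) : |lw n i| ≤ Mc n := by
  have h1 := Mc_ge_one hn
  unfold lw
  split_ifs
  · rw [abs_one]; exact h1
  · rw [abs_neg, abs_of_nonneg (by linarith)]
  · rw [abs_one]; exact h1

lemma lw_even (n k : ℕ) : lw n (2*k) = 1 := by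
  unfold lw
  rw [if_pos (by omega)]

lemma lw_eventually (n : ℕ) {i : ℕ} (hi : 2*n ≤ i) : lw n i = 1 := by
  unfold lw
  split_ifs with h1 h2
  · rfl
  · omega
  · rfl

lemma lw_tendsto (n : ℕ) : Tendsto (lw n) atTop (𝓝 1) := by
  refine Tendsto.congr' ?_ tendsto_const_nhds
  filter_upwards [eventually_ge_atTop (2*n)] with i hi
  exact (lw_eventually n hi).symm

lemma lw_tsum {n : ℕ} (hn : 1 ≤ n) : ∑' i, af i * lw n i = 1 := by
  set c : ℝ := -(Mc n + 1) with hc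
  set g : ℕ → ℝ := fun i => if i % 2 = 0 then 0 else if i < 2*n then af i * c else 0 with hg
  have hsplit : ∀ i, af i * lw n i = af i + g i := by
    intro i
    simp only [hg, lw]
    split_ifs <;> ring
  have hgsupp : ∀ b ∉ Finset.range (2*n), g b = 0 := by
    intro b hb
    simp only [Finset.mem_range, not_lt] at hb
    simp only [hg]
    split_ifs <;> first | rfl | omega
  have hgsum : Summable g := summable_of_ne_finset_zero hgsupp
  have hsum : ∑' i, af i * lw n i = ∑' i, af i + ∑' i, g i := by
    rw [← Summable.tsum_add summable_af hgsum]
    exact tsum_congr hsplit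
  have hgval : ∑' i, g i = -(1 - (1/4:ℝ)^n)/3 * c := by
    rw [tsum_eq_sum hgsupp]
    have : ∀ i ∈ Finset.range (2*n), g i = (if i % 2 = 0 then (0:ℝ) else af i) * c := by
      intro i hi
      simp only [Finset.mem_range] at hi
      simp only [hg]
      split_ifs <;> first | ring | omega
    rw [Finset.sum_congr rfl this, ← Finset.sum_mul, sum_odd_af]
  rw [hsum, tsum_af, hgval, hc, Mc]
  have h := q_lt_one hn
  set q := (1/4:ℝ)^n with hq
  have hne : 1 - q ≠ 0 := by linarith
  field_simp
  ring

lemma WP_neg {x : ℕ → ℝ} (h : WP x) : WP (fun i => -(x i)) := by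
  obtain ⟨⟨L, hL⟩, h2⟩ := h
  refine ⟨⟨-L, hL.neg⟩, ?_⟩
  have he : ∑' i, af i * (-(x i)) = -∑' i, af i * x i := by
    rw [← tsum_neg]
    exact tsum_congr fun i => by ring
  rw [he]
  exact h2.neg

lemma lw_mem {n : ℕ} (hn : 1 ≤ n) : WP (lw n) :=
  ⟨⟨1, lw_tendsto n⟩, by rw [lw_tsum hn]; exact lw_tendsto n⟩

lemma lower_bound {y : ell1} (hy : y ∈ @closure _ wsT (convexHull ℝ CC)) : 1 ≤ ‖y‖ := by
  have main : ∀ n : ℕ, 1 ≤ n → 1 ≤ Mc n * ‖y‖ := by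
    intro n hn
    have hub : ∑' i, y i * lw n i ≤ 1 := by
      refine key ⟨lw n, lw_mem hn⟩ (abs_lw_le hn) 1 (fun k => ?_) hy
      show lw n (2*k) ≤ 1
      rw [lw_even]
    have hlb : 1 ≤ ∑' i, y i * lw n i := by
      have h2 : ∑' i, y i * (fun j => -(lw n j)) i ≤ -1 := by
        refine key ⟨fun j => -(lw n j), WP_neg (lw_mem hn)⟩ (M := Mc n)
          (fun i => by rw [abs_neg]; exact abs_lw_le hn i) (-1) (fun k => ?_) hy
        show -(lw n (2*k)) ≤ -1
        rw [lw_even]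
      have h3 : ∑' i, y i * (fun j => -(lw n j)) i = -∑' i, y i * lw n i := by
        rw [← tsum_neg]
        exact tsum_congr fun i => by ring
      rw [h3] at h2
      linarith
    calc (1:ℝ) ≤ |∑' i, y i * lw n i| := by rw [abs_of_nonneg (by linarith)]; exact hlb
      _ ≤ Mc n * ‖y‖ := abs_tsum_mul_le y (abs_lw_le hn)
  have hq : Tendsto (fun n : ℕ => (1/4:ℝ)^n) atTop (𝓝 0) :=
    tendsto_pow_atTop_nhds_zero_of_lt_one (by norm_num) (by norm_num)
  have hMc : Tendsto Mc atTop (𝓝 1) := by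
    have h1 : Tendsto (fun n : ℕ => 1 + (1/4:ℝ)^n) atTop (𝓝 (1 + 0)) :=
      tendsto_const_nhds.add hq
    have h2 : Tendsto (fun n : ℕ => 1 - (1/4:ℝ)^n) atTop (𝓝 (1 - 0)) :=
      tendsto_const_nhds.sub hq
    have h3 := h1.div h2 (by norm_num : (1:ℝ) - 0 ≠ 0)
    norm_num at h3
    exact h3.congr fun n => by rw [Mc]; rfl
  have hlim : Tendsto (fun n => Mc n * ‖y‖) atTop (𝓝 ‖y‖) := by
    simpa using hMc.mul_const ‖y‖
  refine ge_of_tendsto hlim ?_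
  filter_upwards [eventually_ge_atTop 1] with n hn
  exact main n hn

lemma abs_sign_le (x : ℝ) : |Real.sign x| ≤ 1 := by
  rcases Real.sign_apply_eq x with h | h | h <;> rw [h] <;> norm_num

lemma mul_sign (x : ℝ) : x * Real.sign x = |x| := by
  rcases lt_trichotomy x 0 with h | h | h
  · rw [Real.sign_of_neg h, abs_of_neg h]; ring
  · simp [h]
  · rw [Real.sign_of_pos h, abs_of_pos h]; ring

lemma summable_af_mul {w : ℕ → ℝ} {M : ℝ} (hb : ∀ i, |w i| ≤ M) :
    Summable fun i => af i * w i := by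
  refine Summable.of_abs (Summable.of_nonneg_of_le (fun i => abs_nonneg _) (fun i => ?_)
    (summable_abs_af.mul_right M))
  rw [abs_mul]
  exact mul_le_mul_of_nonneg_left (hb i) (abs_nonneg _)

lemma summable_af_add (N : ℕ) : Summable fun i => af (i + N) :=
  (summable_nat_add_iff N).2 summable_af

lemma abs_tsum_af_add_le (N : ℕ) : |∑' i, af (i + N)| ≤ (1/2:ℝ)^N := by
  have habs : Summable fun i => |af (i + N)| := (summable_nat_add_iff N).2 summable_abs_af
  have h1 : |∑' i, af (i + N)| ≤ ∑' i, |af (i + N)| := by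
    have := norm_tsum_le_tsum_norm (f := fun i => af (i + N))
      (by simpa only [Real.norm_eq_abs] using habs)
    simpa only [Real.norm_eq_abs] using this
  have h2 : ∑' i, |af (i + N)| = (1/2:ℝ)^N := by
    have he : ∀ i, |af (i + N)| = (1/2:ℝ)^N * ((1/2:ℝ) * (1/2)^i) := by
      intro i
      rw [abs_af]
      rw [show i + N + 1 = N + (i + 1) by ring, pow_add, pow_succ']
    rw [tsum_congr he, tsum_mul_left, tsum_mul_left,
      tsum_geometric_of_lt_one (by norm_num) (by norm_num)]
    norm_num
  rw [← h2] at *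
  exact h1

lemma abs_sum_af_le (N : ℕ) {w : ℕ → ℝ} (hb : ∀ i, |w i| ≤ 1) :
    |∑ i ∈ Finset.range N, af i * w i| ≤ 1 := by
  calc |∑ i ∈ Finset.range N, af i * w i| ≤ ∑ i ∈ Finset.range N, |af i * w i| :=
        Finset.abs_sum_le_sum_abs _ _
    _ ≤ ∑ i ∈ Finset.range N, |af i| := by
        refine Finset.sum_le_sum fun i _ => ?_
        rw [abs_mul]
        calc |af i| * |w i| ≤ |af i| * 1 := mul_le_mul_of_nonneg_left (hb i) (abs_nonneg _)
          _ = |af i| := mul_one _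
    _ ≤ ∑' i, |af i| := Summable.sum_le_tsum _ (fun i _ => abs_nonneg _) summable_abs_af
    _ = 1 := tsum_abs_af

lemma upper_est {y : ell1} (hy : y ∈ @closure _ wsT (convexHull ℝ CC)) {N : ℕ} (hN : 1 ≤ N) :
    ‖y‖ ≤ 1/(1-(1/2:ℝ)^N) + (1 + 1/(1-(1/2:ℝ)^N)) * ∑' i, |y (i + N)| := by
  set q : ℝ := (1/2:ℝ)^N with hqdef
  have hq0 : 0 < q := by positivity
  have hq1 : q ≤ 1/2 := by
    rw [hqdef]
    calc (1/2:ℝ)^N ≤ (1/2)^1 := pow_le_pow_of_le_one (by norm_num) (by norm_num) hN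
      _ = 1/2 := pow_one _
  set s : ℝ := ∑' i, af (i + N) with hsdef
  have hs_abs : |s| ≤ q := abs_tsum_af_add_le N
  have hs_pos : 0 < 1 - s := by
    have := abs_le.1 hs_abs
    linarith
  have h1q : 0 < 1 - q := by linarith
  set t : ℝ := ∑ i ∈ Finset.range N, af i * Real.sign (y i) with htdef
  have ht_abs : |t| ≤ 1 := abs_sum_af_le N (fun i => abs_sign_le _)
  set c : ℝ := t / (1 - s) with hcdef
  set D : ℝ := 1 / (1 - q) with hDdef
  have hD1 : 1 ≤ D := by
    rw [hDdef, le_div_iff₀ h1q]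
    linarith
  have hc_abs : |c| ≤ D := by
    rw [hcdef, hDdef, abs_div, abs_of_pos hs_pos, div_le_div_iff₀ hs_pos h1q]
    have h1 : 1 - q ≤ 1 - s := by
      have := abs_le.1 hs_abs
      linarith
    exact mul_le_mul ht_abs h1 (by linarith) (by norm_num)
  set uw : ℕ → ℝ := fun i => if i < N then Real.sign (y i) else c with huw
  have huw_abs : ∀ i, |uw i| ≤ max 1 |c| := by
    intro i
    simp only [huw]
    split_ifs
    · exact le_max_of_le_left (abs_sign_le _)
    · exact le_max_of_le_right le_rfl
  have huw_B : max 1 |c| ≤ D := max_le hD1 hc_abs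
  -- membership of uw in WP
  have huw_sum : Summable fun i => af i * uw i := summable_af_mul huw_abs
  have huw_tsum : ∑' i, af i * uw i = c := by
    rw [← Summable.sum_add_tsum_nat_add N huw_sum]
    have e1 : ∑ i ∈ Finset.range N, af i * uw i = t := by
      rw [htdef]
      refine Finset.sum_congr rfl fun i hi => ?_
      simp only [huw, if_pos (Finset.mem_range.1 hi)]
    have e2 : ∑' i, af (i + N) * uw (i + N) = s * c := by
      have : ∀ i, af (i + N) * uw (i + N) = af (i + N) * c := by
        intro i
        simp only [huw, if_neg (by omega : ¬ i + N < N)]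
      rw [tsum_congr this, tsum_mul_right, hsdef]
    rw [e1, e2, hcdef]
    field_simp
    ring
  have huw_tendsto : Tendsto uw atTop (𝓝 c) := by
    refine Tendsto.congr' ?_ tendsto_const_nhds
    filter_upwards [eventually_ge_atTop N] with i hi
    simp only [huw, if_neg (show ¬ i < N by omega)]
  have huw_mem : WP uw := ⟨⟨c, huw_tendsto⟩, by rw [huw_tsum]; exact huw_tendsto⟩
  -- apply key
  have hkey : ∑' i, y i * uw i ≤ max 1 |c| := by
    refine key ⟨uw, huw_mem⟩ huw_abs _ (fun k => ?_) hy
    show uw (2*k) ≤ max 1 |c|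
    simp only [huw]
    split_ifs
    · exact le_max_of_le_left ((le_abs_self _).trans (abs_sign_le _))
    · exact le_max_of_le_right (le_abs_self _)
  -- compute tsum
  have hysum : Summable fun i => y i * uw i := summable_mul_of_bounded y huw_abs
  have hyadd : Summable fun i => y (i + N) := by
    have := (summable_nat_add_iff N).2 (ell1_summable_abs y)
    exact Summable.of_abs this
  set T : ℝ := ∑' i, y (i + N) with hTdef
  set tail : ℝ := ∑' i, |y (i + N)| with htail
  have hT_abs : |T| ≤ tail := by
    have := norm_tsum_le_tsum_norm (f := fun i => y (i + N))
      (by simpa only [Real.norm_eq_abs] using (summable_nat_add_iff N).2 (ell1_summable_abs y))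
    simpa only [Real.norm_eq_abs] using this
  have hval : ∑' i, y i * uw i = (∑ i ∈ Finset.range N, |y i|) + T * c := by
    rw [← Summable.sum_add_tsum_nat_add N hysum]
    have e1 : ∑ i ∈ Finset.range N, y i * uw i = ∑ i ∈ Finset.range N, |y i| := by
      refine Finset.sum_congr rfl fun i hi => ?_
      simp only [huw, if_pos (Finset.mem_range.1 hi)]
      exact mul_sign _
    have e2 : ∑' i, y (i + N) * uw (i + N) = T * c := by
      have : ∀ i, y (i + N) * uw (i + N) = y (i + N) * c := by
        intro i
        simp only [huw, if_neg (by omega : ¬ i + N < N)]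
      rw [tsum_congr this, tsum_mul_right, hTdef]
    rw [e1, e2]
  have hnorm : ‖y‖ = (∑ i ∈ Finset.range N, |y i|) + tail := by
    rw [ell1_norm_eq, htail, ← Summable.sum_add_tsum_nat_add N (ell1_summable_abs y)]
  have htail0 : 0 ≤ tail := tsum_nonneg fun i => abs_nonneg _
  have hTc : -(tail * D) ≤ T * c := by
    calc -(tail * D) ≤ -(|T| * |c|) := by
          apply neg_le_neg
          apply mul_le_mul hT_abs hc_abs (abs_nonneg _) htail0
      _ ≤ T * c := neg_abs_le _ |>.trans_eq' (by rw [abs_mul])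
  have final : ‖y‖ ≤ D + (1 + D) * tail := by
    rw [hnorm]
    have h5 : (∑ i ∈ Finset.range N, |y i|) ≤ max 1 |c| - T * c := by linarith [hval ▸ hkey]
    have h6 : max 1 |c| ≤ D := huw_B
    nlinarith
  exact final

lemma upper_bound {y : ell1} (hy : y ∈ @closure _ wsT (convexHull ℝ CC)) : ‖y‖ ≤ 1 := by
  have hq : Tendsto (fun N : ℕ => (1/2:ℝ)^N) atTop (𝓝 0) :=
    tendsto_pow_atTop_nhds_zero_of_lt_one (by norm_num) (by norm_num)
  have hD : Tendsto (fun N : ℕ => 1/(1-(1/2:ℝ)^N)) atTop (𝓝 1) := by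
    have h2 : Tendsto (fun N : ℕ => 1 - (1/2:ℝ)^N) atTop (𝓝 (1 - 0)) :=
      tendsto_const_nhds.sub hq
    have h3 := (tendsto_const_nhds (x := (1:ℝ))).div h2 (by norm_num : (1:ℝ) - 0 ≠ 0)
    norm_num at h3
    exact h3
  have htail : Tendsto (fun N : ℕ => ∑' i, |y (i + N)|) atTop (𝓝 0) :=
    tendsto_sum_nat_add fun i => |y i|
  have hful : Tendsto (fun N : ℕ => 1/(1-(1/2:ℝ)^N) + (1 + 1/(1-(1/2:ℝ)^N)) * ∑' i, |y (i + N)|)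
      atTop (𝓝 (1 + (1 + 1) * 0)) :=
    hD.add ((tendsto_const_nhds.add hD).mul htail)
  norm_num at hful
  refine ge_of_tendsto hful ?_
  filter_upwards [eventually_ge_atTop 1] with N hN
  simpa [one_div] using upper_est hy hN

theorem stmt18 :
    let αf : ℕ → ℝ := fun i => (-1) ^ i * (1 / 2) ^ (i + 1)
    let Wmem : (ℕ → ℝ) → Prop := fun x =>
      (∃ L : ℝ, Tendsto x atTop (𝓝 L)) ∧ Tendsto x atTop (𝓝 (∑' i, αf i * x i))
    let ws : TopologicalSpace ell1 := TopologicalSpace.induced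
      (fun y : ell1 => fun w : {x : ℕ → ℝ // Wmem x} => ∑' i, y i * w.1 i) inferInstance
    let C : Set ell1 := Set.range fun k => basisv (2 * k)
    ∀ y ∈ @closure _ ws (convexHull ℝ C), ‖y‖ = 1 := by
  intro αf Wmem ws C y hy
  exact le_antisymm (upper_bound hy) (lower_bound hy)
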